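/- Let L ∈ ℕ and a = (a_0, …, a_L) ∈ ℝ^{L+1} with a_0 = −1, and let n > 0 and k > 0 be real numbers. Let I be a finite index set, let λ : I → ℝ satisfy, for each i, either λ_i = 0 or λ_i ∈ [n/k, n], and let S = #{i ∈ I : λ_i > 0} with S ≥ 1. Let (N_i)_{i ∈ I} be independent random variables where N_i is Poisson with mean λ_i when λ_i > 0 and N_i = 0 almost surely when λ_i = 0, and let Ŝ = Σ_{i ∈ I} g_L(N_i). Then E[((Ŝ − S)/S)²] ≤ sup_{λ ∈ [n/k, n]} [ (1/S)·Σ_{l=0}^L e^{−λ} a_l² λ^l l! + (e^{−λ} P_L(λ, a))² ]. -/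

import Mathlib

open Finset MeasureTheory ProbabilityTheory

/-- `P L a x = ∑_{l=0}^L a_l x^l`. -/
noncomputable def P (L : ℕ) (a : ℕ → ℝ) (x : ℝ) : ℝ :=
  ∑ l ∈ range (L + 1), a l * x ^ l

/-- The estimator function `g_L`: `g_L(j) = a_j·j! + 1` for `j ≤ L`, and `g_L(j) = 1`
for `j > L`. -/
noncomputable def gL (L : ℕ) (a : ℕ → ℝ) (j : ℕ) : ℝ :=
  if j ≤ L then a j * (j.factorial : ℝ) + 1 else 1

lemma gL_eq (L : ℕ) (a : ℕ → ℝ) (j : ℕ) :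
    gL L a j = 1 + ∑ l ∈ range (L + 1), (a l * l.factorial) * (if j = l then 1 else 0) := by
  simp only [mul_ite, mul_one, mul_zero, Finset.sum_ite_eq, Finset.mem_range, Nat.lt_succ_iff]
  unfold gL
  by_cases h : j ≤ L <;> simp [h, add_comm]

lemma gL_sub_one_sq (L : ℕ) (a : ℕ → ℝ) (j : ℕ) :
    (gL L a j - 1) ^ 2 = ∑ l ∈ range (L + 1), (a l * l.factorial) ^ 2 * (if j = l then 1 else 0) := by
  simp only [mul_ite, mul_one, mul_zero, Finset.sum_ite_eq, Finset.mem_range, Nat.lt_succ_iff]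
  unfold gL
  by_cases h : j ≤ L <;> simp [h]

lemma poisson_moment {Ω : Type*} [MeasurableSpace Ω] (μ : Measure Ω) [IsProbabilityMeasure μ]
    {N : Ω → ℕ} (hm : Measurable N) {x : ℝ} (hx : 0 < x)
    (hp : μ.map N = poissonMeasure x.toNNReal) (L : ℕ) (c : ℕ → ℝ) :
    ∫ ω, (∑ l ∈ range (L + 1), c l * (if N ω = l then (1:ℝ) else 0)) ∂μ
      = ∑ l ∈ range (L + 1), c l * (Real.exp (-x) * x ^ l / l.factorial) := by
  have hsing : ∀ l : ℕ, μ (N ⁻¹' {l}) = ENNReal.ofReal (Real.exp (-x) * x ^ l / l.factorial) := by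
    intro l
    rw [← Measure.map_apply hm (measurableSet_singleton l), hp, poissonMeasure_singleton,
      Real.coe_toNNReal _ hx.le]
  have hifind : ∀ (l : ℕ) (ω : Ω), (if N ω = l then (1:ℝ) else 0)
      = Set.indicator (N ⁻¹' {l}) (fun _ => (1:ℝ)) ω := by
    intro l ω; by_cases h : N ω = l <;> simp [Set.indicator_apply, Set.mem_preimage, h]
  have hint : ∀ l : ℕ, Integrable (fun ω => c l * (if N ω = l then (1:ℝ) else 0)) μ := by
    intro l
    refine (((integrable_const (1:ℝ)).indicator
      (hm (measurableSet_singleton l))).const_mul (c l)).congr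
      (Filter.Eventually.of_forall fun ω => ?_)
    exact congrArg (fun t => c l * t) (hifind l ω).symm
  rw [integral_finset_sum _ (fun l _ => hint l)]
  refine Finset.sum_congr rfl fun l _ => ?_
  rw [integral_const_mul]
  congr 1
  simp only [hifind]
  rw [integral_indicator_const _ (hm (measurableSet_singleton l)), measureReal_def, hsing l, smul_eq_mul, mul_one]
  exact ENNReal.toReal_ofReal (by positivity)

lemma alg_aux (S A B : ℝ) (hS : S ≠ 0) :
    (A + S * B) / S ^ 2 = (1 / S) * ((1 / S) * A + B) := by
  field_simp


open Classical in
theorem stmt_19 {Ω : Type*} [MeasurableSpace Ω] (μ : Measure Ω) [IsProbabilityMeasure μ]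
    {I : Type*} [Fintype I] (L : ℕ) (a : ℕ → ℝ) (ha0 : a 0 = -1)
    (n k : ℝ) (hn : 0 < n) (hk : 0 < k)
    (lam : I → ℝ) (hlam : ∀ i, lam i = 0 ∨ lam i ∈ Set.Icc (n / k) n)
    (hS : 1 ≤ (Finset.univ.filter fun i : I => 0 < lam i).card)
    (N : I → Ω → ℕ) (hmeas : ∀ i, Measurable (N i))
    (hindep : iIndepFun N μ)
    (hpois : ∀ i, 0 < lam i → μ.map (N i) = poissonMeasure (lam i).toNNReal)
    (hzero : ∀ i, lam i = 0 → ∀ᵐ ω ∂μ, N i ω = 0) :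
    (∫ ω, (((∑ i : I, gL L a (N i ω)) -
          ((Finset.univ.filter fun i : I => 0 < lam i).card : ℝ)) /
        ((Finset.univ.filter fun i : I => 0 < lam i).card : ℝ)) ^ 2 ∂μ)
      ≤ sSup ((fun x : ℝ =>
          (1 / ((Finset.univ.filter fun i : I => 0 < lam i).card : ℝ)) *
              (∑ l ∈ range (L + 1),
                Real.exp (-x) * (a l) ^ 2 * x ^ l * (l.factorial : ℝ))
            + (Real.exp (-x) * P L a x) ^ 2) '' Set.Icc (n / k) n) := by
  set pos := (Finset.univ.filter fun i : I => 0 < lam i) with hpos_def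
  set S : ℝ := (pos.card : ℝ) with hS_def
  have hS1 : (1:ℝ) ≤ S := by rw [hS_def]; exact_mod_cast hS
  have hSpos : (0:ℝ) < S := lt_of_lt_of_le one_pos hS1
  set V : ℝ → ℝ := fun x =>
    ∑ l ∈ range (L + 1), Real.exp (-x) * (a l) ^ 2 * x ^ l * (l.factorial : ℝ) with hV_def
  set g : ℝ → ℝ := fun x => (1 / S) * V x + (Real.exp (-x) * P L a x) ^ 2 with hg_def
  set M : ℝ := sSup (g '' Set.Icc (n / k) n) with hM_def
  set X : I → Ω → ℝ := fun i ω => gL L a (N i ω) with hX_def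
  set b : I → ℝ := fun i => Real.exp (-(lam i)) * P L a (lam i) with hb_def
  -- trivial facts
  have hlam0 : ∀ i, ¬ 0 < lam i → lam i = 0 := by
    intro i hi
    rcases hlam i with h | h
    · exact h
    · exact absurd (lt_of_lt_of_le (div_pos hn hk) h.1) hi
  -- measurability and integrability
  have hXmeas : ∀ i, Measurable (X i) := fun i => (measurable_from_nat (f := gL L a)).comp (hmeas i)
  set C : ℝ := 1 + ∑ l ∈ range (L + 1), |a l| * (l.factorial : ℝ) with hC_def
  have hCsum : (0:ℝ) ≤ ∑ l ∈ range (L + 1), |a l| * (l.factorial : ℝ) :=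
    Finset.sum_nonneg fun l _ => by positivity
  have hgL_bound : ∀ j, |gL L a j| ≤ C := by
    intro j
    by_cases hj : j ≤ L
    · have hmem : j ∈ range (L + 1) := by simpa [Nat.lt_succ_iff] using hj
      have h1 : |a j * j.factorial| ≤ ∑ l ∈ range (L + 1), |a l| * (l.factorial : ℝ) := by
        rw [abs_mul, abs_of_nonneg (by positivity : (0:ℝ) ≤ (j.factorial : ℝ))]
        exact Finset.single_le_sum (f := fun l => |a l| * (l.factorial : ℝ))
          (fun l _ => by positivity) hmem
      calc |gL L a j| = |a j * j.factorial + 1| := by simp [gL, hj]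
        _ ≤ |a j * j.factorial| + 1 := by
            simpa using abs_add_le (a j * (j.factorial : ℝ)) 1
        _ ≤ C := by rw [hC_def]; linarith
    · have : gL L a j = 1 := by simp [gL, hj]
      rw [this]; rw [hC_def]; simp; linarith
  have hXmem : ∀ i, MemLp (X i) 2 μ := fun i =>
    MemLp.of_bound (hXmeas i).aestronglyMeasurable C
      (Filter.Eventually.of_forall fun ω => by
        simpa [Real.norm_eq_abs] using hgL_bound (N i ω))
  have hXint : ∀ i, Integrable (X i) μ := fun i => (hXmem i).integrable one_le_two
  have hX2int : ∀ i, Integrable (fun ω => X i ω ^ 2) μ := fun i => (hXmem i).integrable_sq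
  -- expectations for positive lambda
  have hE : ∀ i, 0 < lam i → ∫ ω, X i ω ∂μ = 1 + b i := by
    intro i hi
    have heq : ∀ ω, X i ω = 1 + ∑ l ∈ range (L + 1),
        (a l * l.factorial) * (if N i ω = l then (1:ℝ) else 0) := fun ω => gL_eq L a (N i ω)
    rw [integral_congr_ae (Filter.Eventually.of_forall heq)]
    have hintsum : Integrable (fun ω => ∑ l ∈ range (L + 1),
        (a l * l.factorial) * (if N i ω = l then (1:ℝ) else 0)) μ := by
      have h' : Integrable (fun ω => X i ω - 1) μ := (hXint i).sub (integrable_const 1)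
      refine h'.congr (Filter.Eventually.of_forall fun ω => ?_)
      show X i ω - 1 = _
      rw [heq ω]; ring
    rw [integral_add (integrable_const 1) hintsum, integral_const,
      poisson_moment μ (hmeas i) hi (hpois i hi) L]
    have : ∑ l ∈ range (L + 1), (a l * l.factorial) *
        (Real.exp (-(lam i)) * (lam i) ^ l / l.factorial) = b i := by
      rw [hb_def]
      simp only [P, Finset.mul_sum]
      refine Finset.sum_congr rfl fun l _ => ?_
      have hfac : (l.factorial : ℝ) ≠ 0 := Nat.cast_ne_zero.mpr l.factorial_ne_zero
      field_simp
    rw [this]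
    simp
  have hE2 : ∀ i, 0 < lam i → ∫ ω, (X i ω - 1) ^ 2 ∂μ = V (lam i) := by
    intro i hi
    have heq : ∀ ω, (X i ω - 1) ^ 2 = ∑ l ∈ range (L + 1),
        (a l * l.factorial) ^ 2 * (if N i ω = l then (1:ℝ) else 0) :=
      fun ω => gL_sub_one_sq L a (N i ω)
    rw [integral_congr_ae (Filter.Eventually.of_forall heq),
      poisson_moment μ (hmeas i) hi (hpois i hi) L]
    rw [hV_def]
    refine Finset.sum_congr rfl fun l _ => ?_
    have hfac : (l.factorial : ℝ) ≠ 0 := Nat.cast_ne_zero.mpr l.factorial_ne_zero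
    field_simp
  -- variance bounds
  have hVarPos : ∀ i, 0 < lam i → variance (X i) μ ≤ V (lam i) := by
    intro i hi
    have hvd := variance_eq_sub (hXmem i)
    have hv2 : (∫ ω, (X i ω - 1) ^ 2 ∂μ) = ∫ ω, X i ω ^ 2 ∂μ - 2 * ∫ ω, X i ω ∂μ + 1 := by
      have : ∀ ω, (X i ω - 1) ^ 2 = X i ω ^ 2 - 2 * X i ω + 1 := fun ω => by ring
      rw [integral_congr_ae (Filter.Eventually.of_forall this)]
      have h1 : Integrable (fun ω => X i ω ^ 2 - 2 * X i ω) μ :=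
        (hX2int i).sub ((hXint i).const_mul 2)
      rw [integral_add h1 (integrable_const 1),
        integral_sub (hX2int i) ((hXint i).const_mul 2), integral_const_mul, integral_const]
      simp
    have hm2 : (∫ ω, X i ω ∂μ) = 1 + b i := hE i hi
    have hVv : (∫ ω, (X i ω - 1) ^ 2 ∂μ) = V (lam i) := hE2 i hi
    have hpow : (∫ ω, (X i ^ 2) ω ∂μ) = ∫ ω, X i ω ^ 2 ∂μ := by
      refine integral_congr_ae (Filter.Eventually.of_forall fun ω => ?_)
      simp [Pi.pow_apply]
    rw [hvd]
    rw [hpow] at *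
    nlinarith [sq_nonneg (b i)]
  have hVarZero : ∀ i, ¬ 0 < lam i → variance (X i) μ = 0 := by
    intro i hi
    have h0 := hlam0 i hi
    have hae : X i =ᵐ[μ] 0 := by
      filter_upwards [hzero i h0] with ω hω
      simp [hX_def, hω, gL, ha0]
    have h1 : (∫ ω, (X i ^ 2) ω ∂μ) = 0 := by
      have he : (fun ω => (X i ^ 2) ω) =ᵐ[μ] fun _ => (0:ℝ) := by
        filter_upwards [hzero i h0] with ω hω
        simp [hX_def, Pi.pow_apply, hω, gL, ha0]
      rw [integral_congr_ae he, integral_const]; simp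
    have h2 : (∫ ω, X i ω ∂μ) = 0 := by
      have he : (fun ω => X i ω) =ᵐ[μ] fun _ => (0:ℝ) := by
        filter_upwards [hzero i h0] with ω hω
        simp [hX_def, hω, gL, ha0]
      rw [integral_congr_ae he, integral_const]; simp
    rw [variance_eq_sub (hXmem i), h1, h2]
    ring
  have hEZero : ∀ i, ¬ 0 < lam i → (∫ ω, X i ω ∂μ) = 0 := by
    intro i hi
    have he : (fun ω => X i ω) =ᵐ[μ] fun _ => (0:ℝ) := by
      filter_upwards [hzero i (hlam0 i hi)] with ω hω
      simp [hX_def, hω, gL, ha0]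
    rw [integral_congr_ae he, integral_const]; simp
  -- the sum
  set T : Ω → ℝ := fun ω => ∑ i, X i ω with hT_def
  have hTsum : T = ∑ i ∈ Finset.univ, X i := by
    funext ω; simp [hT_def, Finset.sum_apply]
  have hTmem : MemLp T 2 μ := by
    rw [hTsum]; exact memLp_finsetSum' _ fun i _ => hXmem i
  have hTint : Integrable T μ := hTmem.integrable one_le_two
  have hT2int : Integrable (fun ω => T ω ^ 2) μ := hTmem.integrable_sq
  have hVarT : variance T μ = ∑ i, variance (X i) μ := by
    rw [hTsum]
    exact IndepFun.variance_sum (fun i _ => hXmem i)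
      (fun i _ j _ hij => by
        exact (hindep.indepFun hij).comp (measurable_from_nat (f := gL L a))
          (measurable_from_nat (f := gL L a)))
  have hET : (∫ ω, T ω ∂μ) = S + ∑ i ∈ pos, b i := by
    rw [hT_def]
    rw [integral_finset_sum _ fun i _ => hXint i]
    rw [← Finset.sum_filter_add_sum_filter_not Finset.univ (fun i => 0 < lam i)]
    have h1 : ∑ i ∈ pos, ∫ ω, X i ω ∂μ = ∑ i ∈ pos, (1 + b i) := by
      refine Finset.sum_congr rfl fun i hi => ?_
      exact hE i (by simpa [hpos_def] using hi)
    have h2 : ∑ i ∈ Finset.univ.filter (fun i => ¬ 0 < lam i), ∫ ω, X i ω ∂μ = 0 := by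
      refine Finset.sum_eq_zero fun i hi => ?_
      exact hEZero i (by simpa using (Finset.mem_filter.mp hi).2)
    rw [h1, h2, Finset.sum_add_distrib, Finset.sum_const]
    simp [hS_def]
  -- E[(T - S)^2] = Var T + bias^2
  set B : ℝ := ∑ i ∈ pos, b i with hB_def
  have hkey : (∫ ω, (T ω - S) ^ 2 ∂μ) = variance T μ + B ^ 2 := by
    have hexp : ∀ ω, (T ω - S) ^ 2 = T ω ^ 2 - 2 * S * T ω + S ^ 2 := fun ω => by ring
    rw [integral_congr_ae (Filter.Eventually.of_forall hexp)]
    have hsub : Integrable (fun ω => T ω ^ 2 - 2 * S * T ω) μ :=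
      hT2int.sub (hTint.const_mul (2 * S))
    rw [integral_add hsub (integrable_const _),
      integral_sub hT2int (hTint.const_mul (2 * S)), integral_const_mul, integral_const]
    have hvd := variance_eq_sub hTmem
    have hpow : (∫ ω, (T ^ 2) ω ∂μ) = ∫ ω, T ω ^ 2 ∂μ := by
      refine integral_congr_ae (Filter.Eventually.of_forall fun ω => ?_)
      simp [Pi.pow_apply]
    rw [hpow] at hvd
    rw [hET] at hvd ⊢
    simp only [measureReal_def, measure_univ, ENNReal.toReal_one, one_smul]
    rw [hvd, hB_def]
    ring
  -- variance bound
  have hVarBound : variance T μ ≤ ∑ i ∈ pos, V (lam i) := by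
    rw [hVarT, ← Finset.sum_filter_add_sum_filter_not Finset.univ (fun i => 0 < lam i)]
    have h2 : ∑ i ∈ Finset.univ.filter (fun i => ¬ 0 < lam i), variance (X i) μ = 0 :=
      Finset.sum_eq_zero fun i hi => hVarZero i (by simpa using (Finset.mem_filter.mp hi).2)
    rw [h2, add_zero]
    exact Finset.sum_le_sum fun i hi => hVarPos i (by simpa [hpos_def] using hi)
  -- bias bound
  have hBBound : B ^ 2 ≤ S * ∑ i ∈ pos, (b i) ^ 2 := by
    have := sq_sum_le_card_mul_sum_sq (s := pos) (f := b)
    simpa [hB_def, hS_def] using this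
  -- sup bound
  have hPc : Continuous (P L a) := by
    unfold P
    exact continuous_finset_sum _ fun l _ => continuous_const.mul (continuous_pow l)
  have hgc : Continuous g := by
    rw [hg_def]
    apply Continuous.add
    · refine continuous_const.mul (continuous_finset_sum _ fun l _ => ?_)
      exact (((Real.continuous_exp.comp continuous_neg).mul continuous_const).mul
        (continuous_pow l)).mul continuous_const
    · exact ((Real.continuous_exp.comp continuous_neg).mul hPc).pow 2
  have hbdd : BddAbove (g '' Set.Icc (n / k) n) :=
    (isCompact_Icc.image hgc).bddAbove
  have hterm : ∀ i ∈ pos, (1 / S) * V (lam i) + (b i) ^ 2 ≤ M := by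
    intro i hi
    have hipos : 0 < lam i := by simpa [hpos_def] using hi
    have hmem : lam i ∈ Set.Icc (n / k) n := by
      rcases hlam i with h | h
      · exact absurd h (ne_of_gt hipos)
      · exact h
    have : g (lam i) ∈ g '' Set.Icc (n / k) n := Set.mem_image_of_mem g hmem
    have hle := le_csSup hbdd this
    simpa [hg_def, hb_def, hM_def] using hle
  -- putting together
  have hgoal1 : (∫ ω, ((T ω - S) / S) ^ 2 ∂μ) = (∫ ω, (T ω - S) ^ 2 ∂μ) / S ^ 2 := by
    rw [← integral_div]
    refine integral_congr_ae (Filter.Eventually.of_forall fun ω => ?_)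
    show ((T ω - S) / S) ^ 2 = (T ω - S) ^ 2 / S ^ 2
    rw [div_pow]
  have hfinal : (∫ ω, ((T ω - S) / S) ^ 2 ∂μ) ≤ M := by
    rw [hgoal1, hkey]
    have h1 : variance T μ + B ^ 2 ≤ ∑ i ∈ pos, V (lam i) + S * ∑ i ∈ pos, (b i) ^ 2 :=
      add_le_add hVarBound hBBound
    have h2 : (∑ i ∈ pos, V (lam i) + S * ∑ i ∈ pos, (b i) ^ 2) / S ^ 2
        = (1 / S) * ∑ i ∈ pos, ((1 / S) * V (lam i) + (b i) ^ 2) := by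
      rw [Finset.sum_add_distrib, ← Finset.mul_sum]
      exact alg_aux S _ _ (ne_of_gt hSpos)
    have h3 : ∑ i ∈ pos, ((1 / S) * V (lam i) + (b i) ^ 2) ≤ pos.card • M :=
      Finset.sum_le_card_nsmul _ _ _ hterm
    calc (variance T μ + B ^ 2) / S ^ 2
        ≤ (∑ i ∈ pos, V (lam i) + S * ∑ i ∈ pos, (b i) ^ 2) / S ^ 2 :=
          (div_le_div_iff_of_pos_right (pow_pos hSpos 2)).mpr h1
      _ = (1 / S) * ∑ i ∈ pos, ((1 / S) * V (lam i) + (b i) ^ 2) := h2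
      _ ≤ (1 / S) * (S * M) := by
          apply mul_le_mul_of_nonneg_left _ (one_div_nonneg.mpr hSpos.le)
          calc ∑ i ∈ pos, ((1 / S) * V (lam i) + (b i) ^ 2)
              ≤ pos.card • M := h3
            _ = S * M := by rw [nsmul_eq_mul, hS_def]
      _ = M := by
          rw [← mul_assoc]
          rw [one_div, inv_mul_cancel₀ (ne_of_gt hSpos), one_mul]
  have hM' : M = sSup ((fun x : ℝ =>
      1 / S * (∑ l ∈ range (L + 1),
        Real.exp (-x) * (a l) ^ 2 * x ^ l * (l.factorial : ℝ))
      + (Real.exp (-x) * P L a x) ^ 2) '' Set.Icc (n / k) n) := by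
    simp only [hM_def, hg_def, hV_def]
  exact hM' ▸ hfinal
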